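/- Let X be a real random variable in L¹ on a probability space, and let G ⊆ F be sub-σ-algebras. Then E|E[X | F] − E[X | G]| ≤ E|X̃ − X|, where X̃ is an independent resampling of X in the following sense: if X = f(X₁, X₂, X₃) for independent random elements X₁, X₂, X₃ with G = σ(X₁), F = σ(X₁, X₂), then X̃ = f(X₁, X₂′, X₃) where X₂′ is an independent copy of X₂, independent of (X₁, X₂, X₃). -/

import Mathlib

open MeasureTheory ProbabilityTheory

lemma condExp_comap_indepFun
    {Ω α β : Type*} [MeasurableSpace Ω] [MeasurableSpace α] [MeasurableSpace β]
    (μ : Measure Ω) [IsProbabilityMeasure μ]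
    {Y : Ω → α} {Z : Ω → β} (hY : Measurable Y) (hZ : Measurable Z)
    (hindep : IndepFun Y Z μ)
    {φ : α × β → ℝ} (hφ : Measurable φ)
    (hint : Integrable (fun ω => φ (Y ω, Z ω)) μ) :
    μ[(fun ω => φ (Y ω, Z ω)) | MeasurableSpace.comap Y inferInstance]
      =ᵐ[μ] fun ω => ∫ z, φ (Y ω, z) ∂(μ.map Z) := by
  have hm : MeasurableSpace.comap Y inferInstance ≤ (by infer_instance : MeasurableSpace Ω) :=
    hY.comap_le
  have hmapYZ : μ.map (fun ω => (Y ω, Z ω)) = (μ.map Y).prod (μ.map Z) :=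
    (indepFun_iff_map_prod_eq_prod_map_map hY.aemeasurable hZ.aemeasurable).mp hindep
  have hprodInt : Integrable φ ((μ.map Y).prod (μ.map Z)) := by
    rw [← hmapYZ]
    exact (integrable_map_measure hφ.aestronglyMeasurable (hY.prodMk hZ).aemeasurable).mpr hint
  have hGsm : StronglyMeasurable fun y => ∫ z, φ (y, z) ∂(μ.map Z) :=
    hφ.stronglyMeasurable.integral_prod_right'
  have hGint : Integrable (fun y => ∫ z, φ (y, z) ∂(μ.map Z)) (μ.map Y) :=
    hprodInt.integral_prod_left
  have hgint : Integrable (fun ω => ∫ z, φ (Y ω, z) ∂(μ.map Z)) μ :=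
    (integrable_map_measure hGsm.aestronglyMeasurable hY.aemeasurable).mp hGint
  refine (ae_eq_condExp_of_forall_setIntegral_eq hm hint
    (fun s _ _ => hgint.integrableOn) (fun s hs _ => ?_) ?_).symm
  · obtain ⟨A, hA, rfl⟩ := hs
    calc ∫ ω in Y ⁻¹' A, ∫ z, φ (Y ω, z) ∂(μ.map Z) ∂μ
        = ∫ y in A, ∫ z, φ (y, z) ∂(μ.map Z) ∂(μ.map Y) := by
          rw [setIntegral_map hA hGsm.aestronglyMeasurable hY.aemeasurable]
      _ = ∫ p in A ×ˢ Set.univ, φ p ∂((μ.map Y).prod (μ.map Z)) := by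
          rw [setIntegral_prod _ (hprodInt.integrableOn), Measure.restrict_univ]
      _ = ∫ ω in (fun ω => (Y ω, Z ω)) ⁻¹' (A ×ˢ Set.univ), φ (Y ω, Z ω) ∂μ := by
          rw [← hmapYZ,
            setIntegral_map (hA.prod MeasurableSet.univ) hφ.aestronglyMeasurable
              (hY.prodMk hZ).aemeasurable]
      _ = ∫ ω in Y ⁻¹' A, φ (Y ω, Z ω) ∂μ := by
          rw [Set.mk_preimage_prod, Set.preimage_univ, Set.inter_univ]
  · exact StronglyMeasurable.aestronglyMeasurable
      (hGsm.comp_measurable (Measurable.of_comap_le le_rfl))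

lemma comap_pair_eq_sup {Ω γ δ : Type*} [MeasurableSpace γ] [MeasurableSpace δ]
    (Y : Ω → γ) (Z : Ω → δ) :
    MeasurableSpace.comap (fun ω => (Y ω, Z ω)) Prod.instMeasurableSpace =
      MeasurableSpace.comap Y inferInstance ⊔ MeasurableSpace.comap Z inferInstance := by
  show MeasurableSpace.comap _
    (MeasurableSpace.comap Prod.fst inferInstance ⊔ MeasurableSpace.comap Prod.snd inferInstance)
      = _
  rw [MeasurableSpace.comap_sup, MeasurableSpace.comap_comp, MeasurableSpace.comap_comp]
  rfl

theorem condExp_diff_le_resample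
    {Ω E₁ E₂ E₃ : Type*} [MeasurableSpace Ω] [MeasurableSpace E₁]
    [MeasurableSpace E₂] [MeasurableSpace E₃]
    (μ : Measure Ω) [IsProbabilityMeasure μ]
    (X₁ : Ω → E₁) (X₂ X₂' : Ω → E₂) (X₃ : Ω → E₃)
    (hX₁ : Measurable X₁) (hX₂ : Measurable X₂) (hX₂' : Measurable X₂')
    (hX₃ : Measurable X₃)
    (hindep : iIndep
      ![MeasurableSpace.comap X₁ inferInstance, MeasurableSpace.comap X₂ inferInstance,
        MeasurableSpace.comap X₂' inferInstance, MeasurableSpace.comap X₃ inferInstance] μ)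
    (hid : IdentDistrib X₂ X₂' μ μ)
    (f : E₁ → E₂ → E₃ → ℝ)
    (hf : Measurable fun p : E₁ × E₂ × E₃ => f p.1 p.2.1 p.2.2)
    (hint : Integrable (fun ω => f (X₁ ω) (X₂ ω) (X₃ ω)) μ)
    (hint' : Integrable (fun ω => f (X₁ ω) (X₂' ω) (X₃ ω)) μ) :
    ∫ ω, |(μ[(fun ω' => f (X₁ ω') (X₂ ω') (X₃ ω')) |
            MeasurableSpace.comap (fun ω' => (X₁ ω', X₂ ω')) inferInstance]) ω -
          (μ[(fun ω' => f (X₁ ω') (X₂ ω') (X₃ ω')) |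
            MeasurableSpace.comap X₁ inferInstance]) ω| ∂μ ≤
      ∫ ω, |f (X₁ ω) (X₂' ω) (X₃ ω) - f (X₁ ω) (X₂ ω) (X₃ ω)| ∂μ := by
  set X : Ω → ℝ := fun ω => f (X₁ ω) (X₂ ω) (X₃ ω) with hX
  set X' : Ω → ℝ := fun ω => f (X₁ ω) (X₂' ω) (X₃ ω) with hX'
  set M : Fin 4 → MeasurableSpace Ω :=
    ![MeasurableSpace.comap X₁ inferInstance, MeasurableSpace.comap X₂ inferInstance,
      MeasurableSpace.comap X₂' inferInstance, MeasurableSpace.comap X₃ inferInstance] with hM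
  have hle : ∀ i, M i ≤ (by infer_instance : MeasurableSpace Ω) := by
    have h4 : ∀ i : Fin 4, i = 0 ∨ i = 1 ∨ i = 2 ∨ i = 3 := by decide
    intro i
    rcases h4 i with rfl | rfl | rfl | rfl
    exacts [hX₁.comap_le, hX₂.comap_le, hX₂'.comap_le, hX₃.comap_le]
  have hM0 : M 0 = MeasurableSpace.comap X₁ inferInstance := rfl
  have hM1 : M 1 = MeasurableSpace.comap X₂ inferInstance := rfl
  have hM2 : M 2 = MeasurableSpace.comap X₂' inferInstance := rfl
  have hM3 : M 3 = MeasurableSpace.comap X₃ inferInstance := rfl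
  have hindep' : iIndep M μ := hindep
  have h12_2'3 : IndepFun (fun ω => (X₁ ω, X₂ ω)) (fun ω => (X₂' ω, X₃ ω)) μ := by
    show Indep _ _ μ
    rw [comap_pair_eq_sup X₁ X₂, comap_pair_eq_sup X₂' X₃, ← hM0, ← hM1, ← hM2, ← hM3]
    have := indep_iSup_of_disjoint hle hindep'
      (S := {0, 1}) (T := {2, 3}) (by simp [Set.disjoint_left])
    simpa [iSup_or, iSup_sup_eq] using this
  have h23_1 : IndepFun (fun ω => (X₂ ω, X₃ ω)) X₁ μ := by
    show Indep _ _ μ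
    rw [comap_pair_eq_sup X₂ X₃, ← hM0, ← hM1, ← hM3]
    have := indep_iSup_of_disjoint hle hindep'
      (S := {1, 3}) (T := {0}) (by simp [Set.disjoint_left])
    simpa [iSup_or, iSup_sup_eq] using this
  have h2_3 : IndepFun X₂ X₃ μ := by
    show Indep _ _ μ
    rw [← hM1, ← hM3]
    exact hindep'.indep (by decide)
  have h2'_3 : IndepFun X₂' X₃ μ := by
    show Indep _ _ μ
    rw [← hM2, ← hM3]
    exact hindep'.indep (by decide)
  -- the two pair laws coincide
  have hlaw : μ.map (fun ω => (X₂ ω, X₃ ω)) = μ.map (fun ω => (X₂' ω, X₃ ω)) := by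
    rw [(indepFun_iff_map_prod_eq_prod_map_map hX₂.aemeasurable hX₃.aemeasurable).mp h2_3,
      (indepFun_iff_map_prod_eq_prod_map_map hX₂'.aemeasurable hX₃.aemeasurable).mp h2'_3,
      hid.map_eq]
  -- conditional expectations as integrals against laws
  have hφ₁ : Measurable fun p : (E₁ × E₂) × E₂ × E₃ => f p.1.1 p.2.1 p.2.2 :=
    hf.comp ((measurable_fst.fst).prodMk ((measurable_snd.fst).prodMk measurable_snd.snd))
  have hF' : μ[X' | MeasurableSpace.comap (fun ω' => (X₁ ω', X₂ ω')) inferInstance] =ᵐ[μ]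
      fun ω => ∫ q : E₂ × E₃, f (X₁ ω) q.1 q.2 ∂(μ.map (fun ω => (X₂' ω, X₃ ω))) := by
    have := condExp_comap_indepFun μ (hX₁.prodMk hX₂) (hX₂'.prodMk hX₃) h12_2'3 hφ₁ hint'
    exact this
  have hG : μ[X | MeasurableSpace.comap X₁ inferInstance] =ᵐ[μ]
      fun ω => ∫ q : E₂ × E₃, f (X₁ ω) q.1 q.2 ∂(μ.map (fun ω => (X₂ ω, X₃ ω))) := by
    have := condExp_comap_indepFun μ hX₁ (hX₂.prodMk hX₃) h23_1.symm hf hint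
    exact this
  have hGF : μ[X | MeasurableSpace.comap X₁ inferInstance] =ᵐ[μ] μ[X' | MeasurableSpace.comap (fun ω' => (X₁ ω', X₂ ω')) inferInstance] := by
    rw [hlaw] at hG
    exact hG.trans hF'.symm
  have hsub : μ[X | MeasurableSpace.comap (fun ω' => (X₁ ω', X₂ ω')) inferInstance] - μ[X' | MeasurableSpace.comap (fun ω' => (X₁ ω', X₂ ω')) inferInstance] =ᵐ[μ] μ[X - X' | MeasurableSpace.comap (fun ω' => (X₁ ω', X₂ ω')) inferInstance] := (condExp_sub hint hint' _).symm
  calc ∫ ω, |(μ[X | MeasurableSpace.comap (fun ω' => (X₁ ω', X₂ ω')) inferInstance]) ω - (μ[X | MeasurableSpace.comap X₁ inferInstance]) ω| ∂μ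
      = ∫ ω, |(μ[X - X' | MeasurableSpace.comap (fun ω' => (X₁ ω', X₂ ω')) inferInstance]) ω| ∂μ := by
        refine integral_congr_ae ?_
        filter_upwards [hGF, hsub] with ω h₁ h₂
        rw [h₁, ← h₂, Pi.sub_apply]
    _ ≤ ∫ ω, |(X - X') ω| ∂μ := integral_abs_condExp_le _
    _ = ∫ ω, |X' ω - X ω| ∂μ := by
        refine integral_congr_ae (Filter.Eventually.of_forall fun ω => ?_)
        exact abs_sub_comm _ _
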